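/- Let F ∈ C²[0,∞) satisfy g(x) := F'(x) + (1-2F(x))/x nonincreasing and nonnegative on (0,∞). Fix x_i > 0 and set F_i = F(x_i), F'_i = F'(x_i). Then for all x ≥ x_i: F(x) ≤ h(x) := (F'_i + (1-2F_i)/(2x_i))·x²/x_i - (F'_i + (1-2F_i)/x_i)·x + 1/2. -/

import Mathlib

theorem stmt_16 (F : ℝ → ℝ) (hF : ContDiff ℝ 2 F)
    (hg_anti : AntitoneOn (fun x => deriv F x + (1 - 2*F x)/x) (Set.Ioi (0:ℝ)))
    (hg_nonneg : ∀ x > (0:ℝ), deriv F x + (1 - 2*F x)/x ≥ 0)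
    (xi : ℝ) (hxi : 0 < xi) :
    ∀ x ≥ xi, F x ≤
      (deriv F xi + (1 - 2*F xi)/(2*xi)) * x^2/xi
        - (deriv F xi + (1 - 2*F xi)/xi) * x + 1/2 := by
  set A := deriv F xi + (1 - 2*F xi)/(2*xi) with hA
  set c := deriv F xi + (1 - 2*F xi)/xi with hc
  have hFdiff : Differentiable ℝ F := hF.differentiable (by norm_num)
  set G : ℝ → ℝ := fun x => (A * x^2/xi - c*x + 1/2 - F x)/x^2 with hG
  have hmono : MonotoneOn G (Set.Ici xi) := by
    apply monotoneOn_of_deriv_nonneg (convex_Ici xi)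
    · apply ContinuousOn.div
      · exact (((continuous_const.mul (continuous_pow 2)).div_const xi).sub
          (continuous_const.mul continuous_id)).add continuous_const
          |>.sub hFdiff.continuous |>.continuousOn
      · exact (continuous_pow 2).continuousOn
      · intro x hx
        have : 0 < x := lt_of_lt_of_le hxi hx
        positivity
    · intro x hx
      rw [interior_Ici] at hx
      have hxpos : 0 < x := lt_trans hxi hx
      apply DifferentiableAt.differentiableWithinAt
      apply DifferentiableAt.div
      · exact ((((differentiableAt_const A).mul (differentiableAt_pow 2)).div_const xi).sub
          ((differentiableAt_const c).mul differentiableAt_id)).add (differentiableAt_const _)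
          |>.sub (hFdiff x)
      · exact differentiableAt_pow 2
      · positivity
    · intro x hx
      rw [interior_Ici] at hx
      have hxpos : 0 < x := lt_trans hxi hx
      have hx2 : (x:ℝ)^2 ≠ 0 := by positivity
      have hnum : HasDerivAt (fun x => A * x^2/xi - c*x + 1/2 - F x)
          (A * (2*x)/xi - c - deriv F x) x := by
        have h1 : HasDerivAt (fun x : ℝ => A * x^2/xi) (A * (2*x)/xi) x := by
          have := ((hasDerivAt_pow 2 x).const_mul A).div_const xi
          simpa using this
        have h2 : HasDerivAt (fun x : ℝ => c * x) c x := by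
          simpa using (hasDerivAt_id x).const_mul c
        have h3 := ((h1.sub h2).add_const (1/2)).sub (hFdiff x).hasDerivAt
        exact h3
      have hGd : HasDerivAt G
          (((A * (2*x)/xi - c - deriv F x) * x^2 -
            (A * x^2/xi - c*x + 1/2 - F x) * (2 * x^1)) / (x^2)^2) x :=
        hnum.div (hasDerivAt_pow 2 x) hx2
      rw [hGd.deriv]
      have hgle : deriv F x + (1 - 2*F x)/x ≤ c := by
        have := hg_anti (Set.mem_Ioi.mpr hxi) (Set.mem_Ioi.mpr hxpos) (le_of_lt hx)
        simpa [hc] using this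
      apply div_nonneg _ (by positivity)
      have key : (A * (2*x)/xi - c - deriv F x) * x^2 -
          (A * x^2/xi - c*x + 1/2 - F x) * (2 * x^1)
          = x^2 * (c - (deriv F x + (1 - 2*F x)/x)) := by
        field_simp
        ring
      rw [key]
      have : 0 ≤ c - (deriv F x + (1 - 2*F x)/x) := by linarith
      positivity
  intro x hxx
  have hxpos : 0 < x := lt_of_lt_of_le hxi hxx
  have hGxi : G xi = 0 := by
    simp only [hG, hA, hc]
    field_simp
    ring
  have h0 : (0:ℝ) ≤ G x := by
    have := hmono (Set.self_mem_Ici) (Set.mem_Ici.mpr hxx) hxx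
    rw [hGxi] at this; exact this
  have hx2 : (0:ℝ) < x^2 := by positivity
  have h1 : 0 ≤ A * x^2/xi - c*x + 1/2 - F x := by
    have := mul_nonneg h0 (le_of_lt hx2)
    simp only [hG] at this
    rwa [div_mul_cancel₀ _ (ne_of_gt hx2)] at this
  linarith
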